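/- Let d ≥ 1, let Δ : Matrix ((Fin d) × (Fin d)) (Fin d) ℂ be the branching matrix (Δ (j,k) i = 1 if j = i = k, else 0), let S be a finite index set, and for each σ ∈ S let P_σ : Matrix (Fin d) (Fin d) ℂ be a permutation matrix. For real numbers λ and α_σ (σ ∈ S), set Q = (−λ) • 1 + Σ_{σ∈S} α_σ • P_σ. Then Δ * exp(Q) = e^{−λ} • (exp(Σ_{σ∈S} α_σ • (P_σ ⊗ₖ P_σ)) * Δ), where exp denotes the matrix exponential. In words: Markov evolution followed by a branching event equals a branching event followed by correlated Markov evolution of the two copies. -/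

import Mathlib

open Matrix
open Kronecker
open NormedSpace
open scoped Nat

lemma intertwine_exp {n m : Type*} [Fintype n] [DecidableEq n] [Fintype m] [DecidableEq m]
    (D : Matrix m n ℂ) (A : Matrix n n ℂ) (B : Matrix m m ℂ)
    (h : D * A = B * D) : D * exp A = exp B * D := by
  have hpow : ∀ k : ℕ, D * A ^ k = B ^ k * D := by
    intro k; induction k with
    | zero => simp
    | succ k ih =>
        rw [pow_succ, ← Matrix.mul_assoc, ih, Matrix.mul_assoc, h, ← Matrix.mul_assoc,
          ← pow_succ]
  letI : SeminormedRing (Matrix n n ℂ) := Matrix.linftyOpSemiNormedRing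
  letI : NormedRing (Matrix n n ℂ) := Matrix.linftyOpNormedRing
  letI : NormedAlgebra ℂ (Matrix n n ℂ) := Matrix.linftyOpNormedAlgebra
  letI : SeminormedRing (Matrix m m ℂ) := Matrix.linftyOpSemiNormedRing
  letI : NormedRing (Matrix m m ℂ) := Matrix.linftyOpNormedRing
  letI : NormedAlgebra ℂ (Matrix m m ℂ) := Matrix.linftyOpNormedAlgebra
  have hA : Summable fun k : ℕ => (k !⁻¹ : ℂ) • A ^ k := expSeries_summable' (𝕂 := ℂ) A
  have hB : Summable fun k : ℕ => (k !⁻¹ : ℂ) • B ^ k := expSeries_summable' (𝕂 := ℂ) B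
  let L : Matrix n n ℂ →ₗ[ℂ] Matrix m n ℂ :=
    { toFun := fun X => D * X
      map_add' := fun X Y => Matrix.mul_add D X Y
      map_smul' := fun c X => (Matrix.mul_smul D c X) }
  let R : Matrix m m ℂ →ₗ[ℂ] Matrix m n ℂ :=
    { toFun := fun Y => Y * D
      map_add' := fun X Y => Matrix.add_mul X Y D
      map_smul' := fun c X => (Matrix.smul_mul c X D) }
  have hLc : Continuous L := L.continuous_of_finiteDimensional
  have hRc : Continuous R := R.continuous_of_finiteDimensional
  have h1 : D * exp A = ∑' k : ℕ, (k !⁻¹ : ℂ) • (D * A ^ k) := by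
    rw [exp_eq_tsum (𝕂 := ℂ)]
    have := hA.hasSum.map L hLc
    simpa [L, Matrix.mul_smul] using this.tsum_eq.symm
  have h2 : exp B * D = ∑' k : ℕ, (k !⁻¹ : ℂ) • (B ^ k * D) := by
    rw [exp_eq_tsum (𝕂 := ℂ)]
    have := hB.hasSum.map R hRc
    simpa [R, Matrix.smul_mul] using this.tsum_eq.symm
  rw [h1, h2]
  exact tsum_congr fun k => by rw [hpow k]

/-- Markov evolution followed by branching equals branching followed by
correlated Markov evolution:
`Δ * exp(Q) = e^{−λ} • (exp(Σ_σ α_σ • (P_σ ⊗ₖ P_σ)) * Δ)`. -/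
theorem branching_intertwines_exp_rate_matrix
    (d : ℕ) (hd : 1 ≤ d)
    (Δ : Matrix (Fin d × Fin d) (Fin d) ℂ)
    (hΔ : ∀ p : Fin d × Fin d, ∀ i : Fin d,
      Δ p i = if p.1 = i ∧ p.2 = i then 1 else 0)
    (S : Type*) [Fintype S]
    (P : S → Matrix (Fin d) (Fin d) ℂ)
    (hP : ∀ σ : S, ∃ π : Equiv.Perm (Fin d),
      ∀ j i : Fin d, P σ j i = if j = π i then 1 else 0)
    (lam : ℝ) (α : S → ℝ)
    (Q : Matrix (Fin d) (Fin d) ℂ)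
    (hQ : Q = (-lam : ℂ) • (1 : Matrix (Fin d) (Fin d) ℂ) + ∑ σ : S, (α σ : ℂ) • P σ) :
    Δ * exp Q =
      (Real.exp (-lam) : ℂ) •
        (exp (∑ σ : S, (α σ : ℂ) • (P σ ⊗ₖ P σ)) * Δ) := by
  set A : Matrix (Fin d) (Fin d) ℂ := ∑ σ : S, (α σ : ℂ) • P σ with hA
  set B : Matrix (Fin d × Fin d) (Fin d × Fin d) ℂ := ∑ σ : S, (α σ : ℂ) • (P σ ⊗ₖ P σ) with hB
  have hσ : ∀ σ : S, Δ * P σ = (P σ ⊗ₖ P σ) * Δ := by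
    intro σ
    obtain ⟨π, hπ⟩ := hP σ
    ext ⟨j, k⟩ i
    simp only [Matrix.mul_apply, hΔ, hπ, Matrix.kroneckerMap_apply, Fintype.sum_prod_type]
    simp only [ite_and, ite_mul, mul_ite, one_mul, mul_one, zero_mul, mul_zero,
      Finset.sum_ite_eq, Finset.sum_ite_eq', Finset.mem_univ, if_true]
    split_ifs <;> simp_all
  have hint : Δ * A = B * Δ := by
    rw [hA, hB, Matrix.sum_mul, Matrix.mul_sum]
    refine Finset.sum_congr rfl fun σ _ => ?_
    rw [Matrix.mul_smul, Matrix.smul_mul, hσ σ]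
  have hcomm : Commute ((-lam : ℂ) • (1 : Matrix (Fin d) (Fin d) ℂ)) A := by
    unfold Commute SemiconjBy
    rw [Matrix.smul_mul, Matrix.mul_smul, one_mul, mul_one]
  have hexp1 : exp ((-lam : ℂ) • (1 : Matrix (Fin d) (Fin d) ℂ)) =
      (Real.exp (-lam) : ℂ) • (1 : Matrix (Fin d) (Fin d) ℂ) := by
    have h1 : ((-lam : ℂ) • (1 : Matrix (Fin d) (Fin d) ℂ)) =
        Matrix.diagonal (fun _ => (-lam : ℂ)) := by
      ext a b
      by_cases h : a = b <;> simp [Matrix.one_apply, Matrix.diagonal_apply, h]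
    rw [h1, Matrix.exp_diagonal]
    have h2 : exp (-lam : ℂ) = (Real.exp (-lam) : ℂ) := by
      rw [← Complex.exp_eq_exp_ℂ, Complex.ofReal_exp, Complex.ofReal_neg]
    ext a b
    by_cases hab : a = b <;> simp [Matrix.diagonal, hab, h2, Pi.exp_def]
  have hexpQ : exp Q = (Real.exp (-lam) : ℂ) • exp A := by
    rw [hQ, Matrix.exp_add_of_commute _ _ hcomm, hexp1, Matrix.smul_mul, one_mul]
  rw [hexpQ, Matrix.mul_smul, intertwine_exp Δ A B hint]
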